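/- Let S be a semigroup with identity generated by A = {e, g}, where e is an idempotent, and let S₀ = eSe. Suppose that (i) e g^{k₁} e g^{k₂} e = e g^{k₂} e g^{k₁} e for all nonnegative integers k₁, k₂, and (ii) for all nonnegative integers i₁, j₁, i₂, j₂, the sets gⁱ¹S₀gʲ¹ and gⁱ²S₀gʲ² intersect if and only if (i₁, j₁) = (i₂, j₂). Then S has subexponential growth, i.e., lim_{n→∞} (log γ_A(n))/n = 0. -/

import Mathlib

open Filter

/-- `A` generates the semigroup-with-identity `S`: every element of `S` is a
(finite, possibly empty) product of elements of `A`. -/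
def Generates {S : Type*} [Monoid S] (A : Set S) : Prop :=
  ∀ x : S, ∃ l : List S, (∀ a ∈ l, a ∈ A) ∧ l.prod = x

/-- The growth function `γ_A(n)`: the number of elements expressible as a product
of at most `n` elements of `A` (equivalently, the number of `x` with `ℓ_A(x) ≤ n`). -/
noncomputable def growth {S : Type*} [Monoid S] (A : Set S) (n : ℕ) : ℕ :=
  Set.ncard {x : S | ∃ l : List S, (∀ a ∈ l, a ∈ A) ∧ l.length ≤ n ∧ l.prod = x}

section AuxAlg

variable {S : Type*} [Monoid S] (e g : S)

/-- `e * g^{k₁} * e * g^{k₂} * e * ⋯ * g^{kₘ} * e`. -/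
def Gl (L : List ℕ) : S := e * (L.map fun k => g ^ k * e).prod

lemma Gl_cons (k : ℕ) (L : List ℕ) : Gl e g (k :: L) = e * g ^ k * Gl e g L := by
  simp [Gl, mul_assoc]

lemma e_mul_Gl (he : e * e = e) (L : List ℕ) : e * Gl e g L = Gl e g L := by
  simp [Gl, ← mul_assoc, he]

lemma Gl_perm (he : e * e = e)
    (hcomm : ∀ k₁ k₂ : ℕ, e * g ^ k₁ * e * g ^ k₂ * e = e * g ^ k₂ * e * g ^ k₁ * e)
    {L₁ L₂ : List ℕ} (h : L₁.Perm L₂) : Gl e g L₁ = Gl e g L₂ := by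
  induction h with
  | nil => rfl
  | cons a _ ih => rw [Gl_cons, Gl_cons, ih]
  | swap a b L =>
      rw [Gl_cons, Gl_cons, Gl_cons, Gl_cons, ← e_mul_Gl e g he L]
      have h := congrArg (· * Gl e g L) (hcomm b a)
      simpa [mul_assoc] using h
  | trans _ _ ih₁ ih₂ => rw [ih₁, ih₂]

/-- `Fm m` is the canonical product `e * g^{k₁} * e * ⋯ * g^{kₘ} * e` over the
multiset `m` of exponents, taken in sorted order. -/
def Fm (m : Multiset ℕ) : S := Gl e g (m.sort (· ≤ ·))

lemma Fm_zero : Fm e g 0 = e := by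
  simp [Fm, Gl]

lemma Fm_cons (he : e * e = e)
    (hcomm : ∀ k₁ k₂ : ℕ, e * g ^ k₁ * e * g ^ k₂ * e = e * g ^ k₂ * e * g ^ k₁ * e)
    (k : ℕ) (m : Multiset ℕ) : Fm e g (k ::ₘ m) = e * g ^ k * Fm e g m := by
  rw [Fm, Fm, ← Gl_cons]
  refine Gl_perm e g he hcomm (Multiset.coe_eq_coe.mp ?_)
  rw [Multiset.sort_eq]
  change _ = (k ::ₘ ↑(Multiset.sort m (· ≤ ·)) : Multiset ℕ)
  rw [Multiset.sort_eq]

/-- Key structure lemma: any word in `{e,g}` is either a power of `g` or of the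
form `g^i * Fm m * g^j`, with controlled size. -/
lemma key_lemma (he : e * e = e)
    (hcomm : ∀ k₁ k₂ : ℕ, e * g ^ k₁ * e * g ^ k₂ * e = e * g ^ k₂ * e * g ^ k₁ * e)
    (L : List S) (hmem : ∀ a ∈ L, a ∈ ({e, g} : Set S)) :
    (∃ c, c ≤ L.length ∧ L.prod = g ^ c) ∨
    (∃ i j, ∃ m : Multiset ℕ, i + j + m.sum + Multiset.card m ≤ L.length ∧
      L.prod = g ^ i * Fm e g m * g ^ j) := by
  induction L with
  | nil => exact Or.inl ⟨0, le_refl 0, by simp⟩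
  | cons a t ih =>
    have ha : a = e ∨ a = g := by simpa using hmem a (by simp)
    have ht := ih (fun b hb => hmem b (List.mem_cons_of_mem a hb))
    rw [List.prod_cons]
    rcases ht with ⟨c, hc, hp⟩ | ⟨i, j, m, hb, hp⟩
    · rcases ha with ha | ha
      · right
        refine ⟨0, c, 0, by simp; omega, ?_⟩
        rw [ha, hp, Fm_zero]
        simp
      · left
        exact ⟨c + 1, by simp; omega, by rw [ha, hp, pow_succ']⟩
    · rcases ha with ha | ha
      · right
        refine ⟨0, j, i ::ₘ m, by simp; omega, ?_⟩
        rw [ha, hp, Fm_cons e g he hcomm]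
        simp [mul_assoc]
      · right
        refine ⟨i + 1, j, m, by simp; omega, ?_⟩
        rw [ha, hp, pow_succ']
        simp [mul_assoc]

end AuxAlg

section AuxCount

/-- For distinct naturals, the sum dominates `0 + 1 + ⋯ + (card - 1)`. -/
lemma sum_range_card_le : ∀ (k : ℕ) (s : Finset ℕ), s.card = k →
    ∑ i ∈ Finset.range k, i ≤ ∑ a ∈ s, a := by
  intro k
  induction k with
  | zero => simp
  | succ k ih =>
    intro s hs
    have hne : s.Nonempty := Finset.card_pos.mp (by omega)
    have hMs : s.max' hne ∈ s := s.max'_mem hne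
    have hsub : s ⊆ Finset.range (s.max' hne + 1) := fun x hx =>
      Finset.mem_range.mpr (Nat.lt_succ_of_le (Finset.le_max' s x hx))
    have hcard : k ≤ s.max' hne := by
      have := Finset.card_le_card hsub
      rw [Finset.card_range, hs] at this
      omega
    have herase : (s.erase (s.max' hne)).card = k := by
      rw [Finset.card_erase_of_mem hMs, hs]
      omega
    have h1 := ih (s.erase (s.max' hne)) herase
    have h2 : ∑ a ∈ s.erase (s.max' hne), a + s.max' hne = ∑ a ∈ s, a :=
      Finset.sum_erase_add s _ hMs
    rw [Finset.sum_range_succ]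
    omega

lemma sum_toFinset_le (m : Multiset ℕ) : ∑ a ∈ m.toFinset, a ≤ m.sum := by
  have h : m.dedup ≤ m := Multiset.dedup_le m
  obtain ⟨u, hu⟩ := Multiset.le_iff_exists_add.mp h
  have h1 : ∑ a ∈ m.toFinset, a = m.dedup.sum := by
    simp [Finset.sum, Multiset.toFinset]
  have h2 : m.sum = m.dedup.sum + u.sum := by
    conv_lhs => rw [hu]
    exact Multiset.sum_add _ _
  omega

lemma sum_range_getD {M : Type*} [AddCommMonoid M] (φ : ℕ → M) :
    ∀ L : List ℕ, ∑ i ∈ Finset.range L.length, φ (L.getD i 0) = (L.map φ).sum := by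
  intro L
  induction L with
  | nil => simp
  | cons a t ih =>
    rw [List.length_cons, Finset.sum_range_succ']
    simp only [List.getD_cons_succ, List.getD_cons_zero, ih]
    rw [List.map_cons, List.sum_cons, add_comm]

/-- Decoding a tuple of codes into a multiset of naturals: the code
`(n+1)*v + c < (n+1)^2` stands for `c` copies of `v`, and the code `(n+1)^2`
is a sentinel standing for nothing. -/
def decodeM (n tN : ℕ) (f : Fin tN → Fin ((n+1)*(n+1)+1)) : Multiset ℕ :=
  ∑ i : Fin tN, if ((f i : ℕ) = (n+1)*(n+1)) then 0
    else Multiset.replicate ((f i : ℕ) % (n+1)) ((f i : ℕ) / (n+1))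

lemma decodeM_surj (n : ℕ) (m : Multiset ℕ) (hsum : m.sum ≤ n)
    (hcard : Multiset.card m ≤ n) :
    ∃ f : Fin (Nat.sqrt (2*n) + 1) → Fin ((n+1)*(n+1)+1), decodeM n _ f = m := by
  classical
  set L : List ℕ := m.toFinset.sort (· ≤ ·) with hL
  have hlen : L.length = m.toFinset.card := Finset.length_sort _
  -- the number of distinct values is at most sqrt(2n)+1
  have hr : L.length ≤ Nat.sqrt (2*n) + 1 := by
    rw [hlen]
    set r := m.toFinset.card with hrdef
    have h1 : ∑ i ∈ Finset.range r, i ≤ ∑ a ∈ m.toFinset, a :=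
      sum_range_card_le r m.toFinset rfl
    have h2 := sum_toFinset_le m
    have h3 := Finset.sum_range_id_mul_two r
    have h4 : (r - 1) * (r - 1) ≤ r * (r - 1) := Nat.mul_le_mul_right _ (by omega)
    have h5 : r * (r - 1) ≤ 2 * n := by omega
    have h6 : r - 1 ≤ Nat.sqrt (2 * n) := Nat.le_sqrt.mpr (by omega)
    omega
  have hvmem : ∀ i : ℕ, i < L.length → L.getD i 0 ∈ m := by
    intro i hi
    have hmem : L.getD i 0 ∈ L := by
      rw [List.getD_eq_getElem L 0 hi]; exact List.getElem_mem hi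
    exact Multiset.mem_toFinset.mp ((Finset.mem_sort _).mp hmem)
  have hvn : ∀ i : ℕ, i < L.length → L.getD i 0 ≤ n := fun i hi =>
    le_trans (Multiset.single_le_sum (fun x _ => Nat.zero_le x) _ (hvmem i hi)) hsum
  have hcn : ∀ v : ℕ, m.count v ≤ n := fun v =>
    le_trans (Multiset.count_le_card v m) hcard
  have hq : ∀ v c : ℕ, v ≤ n → c ≤ n → (n+1) * v + c < (n+1)*(n+1) := by
    intro v c hv hc
    have h1 : (n+1) * v ≤ (n+1) * n := Nat.mul_le_mul_left _ hv
    have h2 : (n+1)*(n+1) = (n+1)*n + (n+1) := by ring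
    omega
  set f : Fin (Nat.sqrt (2*n) + 1) → Fin ((n+1)*(n+1)+1) := fun i =>
    if h : (i : ℕ) < L.length then
      ⟨(n+1) * (L.getD i 0) + m.count (L.getD i 0), by
        have := hq _ _ (hvn i h) (hcn (L.getD i 0)); omega⟩
    else ⟨(n+1)*(n+1), by omega⟩ with hf
  refine ⟨f, ?_⟩
  have hbody : ∀ i : Fin (Nat.sqrt (2*n) + 1),
      (if ((f i : ℕ) = (n+1)*(n+1)) then (0 : Multiset ℕ)
        else Multiset.replicate ((f i : ℕ) % (n+1)) ((f i : ℕ) / (n+1)))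
      = if (i : ℕ) < L.length then
          Multiset.replicate (m.count (L.getD i 0)) (L.getD i 0) else 0 := by
    intro i
    by_cases h : (i : ℕ) < L.length
    · have hval : (f i : ℕ) = (n+1) * (L.getD i 0) + m.count (L.getD i 0) := by
        rw [hf]; simp only [dif_pos h]
      have hlt := hq _ _ (hvn i h) (hcn (L.getD i 0))
      have hclt : m.count (L.getD i 0) < n + 1 := by
        have := hcn (L.getD i 0); omega
      rw [if_pos h, hval, if_neg (by omega)]
      have hmod : ((n+1) * (L.getD i 0) + m.count (L.getD i 0)) % (n+1)
          = m.count (L.getD i 0) := by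
        rw [Nat.mul_add_mod]; exact Nat.mod_eq_of_lt hclt
      have hdiv : ((n+1) * (L.getD i 0) + m.count (L.getD i 0)) / (n+1)
          = L.getD i 0 := by
        rw [Nat.mul_add_div (by omega)]
        rw [Nat.div_eq_of_lt hclt]
        omega
      rw [hmod, hdiv]
    · have hval : (f i : ℕ) = (n+1)*(n+1) := by
        rw [hf]; simp only [dif_neg h]
      rw [if_pos hval, if_neg h]
  calc decodeM n _ f
      = ∑ i : Fin (Nat.sqrt (2*n) + 1), (if (i : ℕ) < L.length then
          Multiset.replicate (m.count (L.getD i 0)) (L.getD i 0) else 0) :=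
        Finset.sum_congr rfl (fun i _ => hbody i)
    _ = ∑ i ∈ Finset.range (Nat.sqrt (2*n) + 1), (if i < L.length then
          Multiset.replicate (m.count (L.getD i 0)) (L.getD i 0) else 0) :=
        Fin.sum_univ_eq_sum_range (fun i => if i < L.length then
          Multiset.replicate (m.count (L.getD i 0)) (L.getD i 0) else 0) _
    _ = ∑ i ∈ Finset.range L.length, (if i < L.length then
          Multiset.replicate (m.count (L.getD i 0)) (L.getD i 0) else 0) :=
        (Finset.sum_subset (Finset.range_subset_range.mpr hr)
          (fun x _ hx => if_neg (by simpa using hx))).symm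
    _ = ∑ i ∈ Finset.range L.length,
          Multiset.replicate (m.count (L.getD i 0)) (L.getD i 0) :=
        Finset.sum_congr rfl (fun i hi => if_pos (Finset.mem_range.mp hi))
    _ = (L.map (fun v => Multiset.replicate (m.count v) v)).sum :=
        sum_range_getD (fun v => Multiset.replicate (m.count v) v) L
    _ = (m.toFinset.toList.map (fun v => Multiset.replicate (m.count v) v)).sum :=
        List.Perm.sum_eq (List.Perm.map _ (Finset.sort_perm_toList _ _))
    _ = ∑ v ∈ m.toFinset, Multiset.replicate (m.count v) v :=
        Finset.sum_map_toList _ _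
    _ = m := by
        simp only [← Multiset.nsmul_singleton]
        exact Multiset.toFinset_sum_count_nsmul_eq m

end AuxCount

section GrowthBound

variable {S : Type*} [Monoid S]

lemma growth_le (e g : S) (he : e * e = e)
    (hcomm : ∀ k₁ k₂ : ℕ, e * g ^ k₁ * e * g ^ k₂ * e = e * g ^ k₂ * e * g ^ k₁ * e)
    (n : ℕ) :
    growth ({e, g} : Set S) n ≤ (n+2) ^ (2 * Nat.sqrt (2*n) + 5) := by
  classical
  set tN := Nat.sqrt (2*n) + 1 with htN
  set NN := (n+1)*(n+1)+1 with hNN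
  set ι := Fin (n+1) × Fin (n+1) × (Fin tN → Fin NN) with hι
  set ρ : ι → S := fun p => g ^ (p.1 : ℕ) * Fm e g (decodeM n tN p.2.2) * g ^ (p.2.1 : ℕ)
    with hρ
  set pw : Fin (n+1) → S := fun c => g ^ (c : ℕ) with hpw
  have hcover : {x : S | ∃ l : List S, (∀ a ∈ l, a ∈ ({e, g} : Set S)) ∧
      l.length ≤ n ∧ l.prod = x} ⊆ (pw '' Set.univ) ∪ (ρ '' Set.univ) := by
    rintro x ⟨l, hmem, hlen, hprod⟩
    rcases key_lemma e g he hcomm l hmem with ⟨c, hc, hp⟩ | ⟨i, j, m, hb, hp⟩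
    · left
      exact ⟨⟨c, by omega⟩, Set.mem_univ _, by rw [hpw]; simp [← hprod, hp]⟩
    · right
      obtain ⟨f, hfm⟩ := decodeM_surj n m (by omega) (by omega)
      exact ⟨(⟨i, by omega⟩, ⟨j, by omega⟩, f), Set.mem_univ _, by
        rw [hρ]; simp only []
        rw [hfm, ← hprod, hp]⟩
  have hfin : ((pw '' Set.univ) ∪ (ρ '' Set.univ)).Finite :=
    (Set.finite_univ.image pw).union (Set.finite_univ.image ρ)
  have hle : growth ({e, g} : Set S) n ≤
      (pw '' Set.univ).ncard + (ρ '' Set.univ).ncard := by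
    refine le_trans (Set.ncard_le_ncard hcover hfin) (Set.ncard_union_le _ _)
  have hc1 : (pw '' Set.univ).ncard ≤ n + 1 := by
    refine le_trans (Set.ncard_image_le Set.finite_univ) ?_
    rw [Set.ncard_univ, Nat.card_eq_fintype_card, Fintype.card_fin]
  have hc2 : (ρ '' Set.univ).ncard ≤ (n+1) * ((n+1) * NN ^ tN) := by
    refine le_trans (Set.ncard_image_le Set.finite_univ) ?_
    rw [Set.ncard_univ, Nat.card_eq_fintype_card]
    simp [hι, Fintype.card_fun]
  -- arithmetic: (n+1) + (n+1)*((n+1)*NN^tN) ≤ (n+2)^(2*sqrt+5)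
  have harith : (n + 1) + (n+1) * ((n+1) * NN ^ tN) ≤ (n+2) ^ (2 * Nat.sqrt (2*n) + 5) := by
    set s := Nat.sqrt (2*n) with hs
    have hNNle : NN ≤ (n+2) ^ 2 := by rw [hNN]; nlinarith
    have h1 : NN ^ tN ≤ ((n+2) ^ 2) ^ tN := Nat.pow_le_pow_left hNNle _
    have h2 : ((n+2) ^ 2) ^ tN = (n+2) ^ (2 * s + 2) := by
      rw [← pow_mul, htN]; ring_nf
    have h3 : (n+1) * ((n+1) * NN ^ tN) ≤ (n+2) * ((n+2) * (n+2) ^ (2*s+2)) := by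
      apply Nat.mul_le_mul (by omega)
      apply Nat.mul_le_mul (by omega)
      rw [← h2]; exact h1
    have h4 : (n+2) * ((n+2) * (n+2) ^ (2*s+2)) = (n+2) ^ (2*s+4) := by ring
    have h5 : (n+1) ≤ (n+2) ^ (2*s+4) := by
      calc n+1 ≤ n+2 := by omega
        _ = (n+2)^1 := (pow_one _).symm
        _ ≤ (n+2) ^ (2*s+4) := Nat.pow_le_pow_right (by omega) (by omega)
    have h8 : 2 * (n+2) ^ (2*s+4) ≤ (n+2) ^ (2*s+5) := by
      have h6 : (n+2) ^ (2*s+5) = (n+2) * (n+2) ^ (2*s+4) := by ring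
      rw [h6]
      exact Nat.mul_le_mul_right _ (by omega)
    calc (n + 1) + (n+1) * ((n+1) * NN ^ tN)
        ≤ (n+2) ^ (2*s+4) + (n+2) ^ (2*s+4) := Nat.add_le_add h5 (h3.trans (le_of_eq h4))
      _ = 2 * (n+2) ^ (2*s+4) := by ring
      _ ≤ (n+2) ^ (2*s+5) := h8
  calc growth ({e, g} : Set S) n ≤ (n + 1) + (n+1) * ((n+1) * NN ^ tN) := by omega
    _ ≤ (n+2) ^ (2 * Nat.sqrt (2*n) + 5) := harith

end GrowthBound

/-- let `S` be a semigroup with identity generated by `A = {e, g}`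
with `e` idempotent, and `S₀ = eSe`.  Suppose (i) `e g^{k₁} e g^{k₂} e =
e g^{k₂} e g^{k₁} e` for all `k₁, k₂ ≥ 0`, and (ii) `gⁱ¹S₀gʲ¹` and `gⁱ²S₀gʲ²`
intersect exactly when `(i₁,j₁) = (i₂,j₂)`.  Then `S` has subexponential growth:
`lim_{n→∞} (log γ_A(n))/n = 0`. -/
theorem stmt4 {S : Type*} [Monoid S] (e g : S)
    (hgen : Generates ({e, g} : Set S)) (h1 : (1 : S) ∉ ({e, g} : Set S))
    (he : e * e = e)
    (hcomm : ∀ k₁ k₂ : ℕ,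
      e * g ^ k₁ * e * g ^ k₂ * e = e * g ^ k₂ * e * g ^ k₁ * e)
    (hcond : ∀ i₁ j₁ i₂ j₂ : ℕ,
      ({x : S | ∃ y : S, x = g ^ i₁ * (e * y * e) * g ^ j₁} ∩
        {x : S | ∃ y : S, x = g ^ i₂ * (e * y * e) * g ^ j₂}).Nonempty ↔
        (i₁, j₁) = (i₂, j₂)) :
    Tendsto (fun n : ℕ =>
        Real.log (growth ({e, g} : Set S) n) / (n : ℝ)) atTop (nhds 0) := by
  have key : ∀ n : ℕ, growth ({e, g} : Set S) n ≤ (n+2) ^ (2 * Nat.sqrt (2*n) + 5) :=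
    growth_le e g he hcomm
  have hlower : ∀ᶠ n : ℕ in atTop,
      0 ≤ Real.log (growth ({e, g} : Set S) n) / (n : ℝ) :=
    Eventually.of_forall fun n =>
      div_nonneg (Real.log_natCast_nonneg _) (Nat.cast_nonneg n)
  have hupper : ∀ᶠ n : ℕ in atTop, Real.log (growth ({e, g} : Set S) n) / (n : ℝ)
      ≤ 18 * (Real.log ((n : ℝ) + 2) / Real.sqrt ((n : ℝ) + 2)) := by
    filter_upwards [eventually_ge_atTop 2] with n hn
    have hn0 : (0 : ℝ) < (n : ℝ) := by
      have : (2 : ℝ) ≤ (n : ℝ) := by exact_mod_cast hn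
      linarith
    set x : ℝ := (n : ℝ) + 2 with hx
    have hx0 : (0 : ℝ) < x := by positivity
    have hx1 : (1 : ℝ) ≤ x := by rw [hx]; linarith [Nat.cast_nonneg (α := ℝ) n]
    have hsq1 : 1 ≤ Real.sqrt x := Real.one_le_sqrt.mpr hx1
    have hsne : Real.sqrt x ≠ 0 := by positivity
    have ha : 0 ≤ Real.log x := Real.log_nonneg hx1
    set s := Nat.sqrt (2*n) with hs
    set γ := growth ({e, g} : Set S) n with hγ
    -- log γ ≤ (2s+5) * log x
    have hkey : (γ : ℝ) ≤ x ^ (2 * s + 5) := by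
      have h := key n
      have : (γ : ℝ) ≤ (((n+2) ^ (2 * s + 5) : ℕ) : ℝ) := by exact_mod_cast h
      refine this.trans (le_of_eq ?_)
      push_cast
      rw [hx]
    have hlog : Real.log γ ≤ (2 * (s : ℝ) + 5) * Real.log x := by
      rcases Nat.eq_zero_or_pos γ with h0 | hpos
      · rw [h0]
        simp only [Nat.cast_zero, Real.log_zero]
        positivity
      · have h1 : Real.log γ ≤ Real.log (x ^ (2 * s + 5)) :=
          Real.log_le_log (by exact_mod_cast hpos) hkey
        rw [Real.log_pow] at h1
        refine h1.trans (le_of_eq ?_)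
        push_cast
        ring
    -- (s : ℝ) ≤ 2 √x
    have hsx : (s : ℝ) ≤ 2 * Real.sqrt x := by
      have h1 : (s : ℝ) ≤ Real.sqrt ((2*n : ℕ) : ℝ) := by
        refine (Real.le_sqrt (Nat.cast_nonneg s) (Nat.cast_nonneg _)).mpr ?_
        exact_mod_cast Nat.sqrt_le' (2*n)
      have h2 : Real.sqrt ((2*n : ℕ) : ℝ) ≤ Real.sqrt (4 * x) := by
        apply Real.sqrt_le_sqrt
        push_cast
        rw [hx]
        linarith
      have h3 : Real.sqrt (4 * x) = 2 * Real.sqrt x := by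
        rw [show (4 : ℝ) * x = 2^2 * x by ring, Real.sqrt_mul (by positivity),
          Real.sqrt_sq (by norm_num)]
      linarith
    have hC : (2 * (s : ℝ) + 5) ≤ 9 * Real.sqrt x := by nlinarith
    have hnx : x / 2 ≤ (n : ℝ) := by
      rw [hx]
      have : (2 : ℝ) ≤ (n : ℝ) := by exact_mod_cast hn
      linarith
    have hstep1 : Real.log γ / (n : ℝ) ≤ ((2 * (s : ℝ) + 5) * Real.log x) / (n : ℝ) := by
      gcongr
    have hstep2 : ((2 * (s : ℝ) + 5) * Real.log x) / (n : ℝ)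
        ≤ (9 * Real.sqrt x * Real.log x) / (x / 2) := by
      apply div_le_div₀ (by positivity) ?_ (by positivity) hnx
      exact mul_le_mul_of_nonneg_right hC ha
    have hstep3 : (9 * Real.sqrt x * Real.log x) / (x / 2)
        = 18 * (Real.log x / Real.sqrt x) := by
      have hxx : Real.sqrt x ^ 2 = x := Real.sq_sqrt (le_of_lt hx0)
      field_simp
      linear_combination 18 * Real.log x * hxx
    calc Real.log γ / (n : ℝ) ≤ ((2 * (s : ℝ) + 5) * Real.log x) / (n : ℝ) := hstep1
      _ ≤ (9 * Real.sqrt x * Real.log x) / (x / 2) := hstep2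
      _ = 18 * (Real.log x / Real.sqrt x) := hstep3
  have htends : Tendsto (fun n : ℕ =>
      18 * (Real.log ((n : ℝ) + 2) / Real.sqrt ((n : ℝ) + 2))) atTop (nhds 0) := by
    have h0 : Tendsto (fun x : ℝ => Real.log x / x ^ (1/2 : ℝ)) atTop (nhds 0) :=
      (isLittleO_log_rpow_atTop (by norm_num : (0:ℝ) < 1/2)).tendsto_div_nhds_zero
    have h0' : Tendsto (fun x : ℝ => Real.log x / Real.sqrt x) atTop (nhds 0) := by
      refine h0.congr fun x => ?_
      rw [Real.sqrt_eq_rpow]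
    have hcomp : Tendsto (fun n : ℕ => ((n : ℝ) + 2)) atTop atTop :=
      tendsto_atTop_add_const_right atTop 2 tendsto_natCast_atTop_atTop
    have := (h0'.comp hcomp).const_mul (18 : ℝ)
    simpa using this
  exact squeeze_zero' hlower hupper htends
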